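/- Let f be a perfect k-coloring of the Hamming graph H(n,2) with quotient matrix S, let λ_0 > λ_1 > … > λ_l be the distinct eigenvalues of S, and let i be any color. Then there exists a unique tuple of real numbers (a_1,…,a_l) such that for every t = 0,1,…,l−1: Σ_{j=1}^{l} λ_j^t · a_j = |f^{-1}(i)| · (S^t)_{i,i} − (|f^{-1}(i)|² / 2^n) · λ_0^t (where (S^0)_{i,i} = 1); moreover, for every j = 1,…,l the number 2^n · a_j is a non-negative integer. -/

import Mathlib

/-- The Hamming graph `H(n,q)`: vertices are `Fin n → ZMod q`, two vertices are
adjacent iff their Hamming distance is `1`. -/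
def hammingGraph (n q : ℕ) : SimpleGraph (Fin n → ZMod q) where
  Adj x y := hammingDist x y = 1
  symm := by constructor; intro x y h; exact (hammingDist_comm y x).trans h
  loopless := by constructor; intro x h; simp [hammingDist_self] at h

/-- The distance from a vertex `x` to a code `C` in a graph `G`. -/
noncomputable def distToCode {V : Type*} (G : SimpleGraph V) (C : Set V) (x : V) : ℕ :=
  sInf {d : ℕ | ∃ c ∈ C, G.dist x c = d}

/-- The code distance of a code `C` in a graph `G`: the minimum distance between
two distinct codewords. -/
noncomputable def codeDist {V : Type*} (G : SimpleGraph V) (C : Set V) : ℕ :=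
  sInf {d : ℕ | ∃ x ∈ C, ∃ y ∈ C, x ≠ y ∧ G.dist x y = d}

/-- A code `C` is `1`-perfect if every vertex is at distance at most `1`
from exactly one codeword. -/
def IsOnePerfect {V : Type*} (G : SimpleGraph V) (C : Set V) : Prop :=
  ∀ x, ∃! c, c ∈ C ∧ G.dist x c ≤ 1

/-- Deleting the `i`-th coordinate of a tuple. -/
def deleteCoord {α : Type*} {n : ℕ} (i : Fin n) (c : Fin n → α) (j : Fin (n - 1)) : α :=
  c (Fin.cast (show n - 1 + 1 = n by have := i.pos; omega)
      ((Fin.cast (show n = n - 1 + 1 by have := i.pos; omega) i).succAbove j))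

/-- The projection (puncturing) of a code in `H(n,q)` at coordinate `i`. -/
def hammingProj {n q : ℕ} (i : Fin n) (C : Set (Fin n → ZMod q)) :
    Set (Fin (n - 1) → ZMod q) :=
  (deleteCoord i) '' C

/-- A code `C` in `H(n,q)` is extended `1`-perfect if it is nonempty, its code distance
is `4`, and its projection at some coordinate is a `1`-perfect code in `H(n-1,q)`. -/
def IsExtOnePerfectH (n q : ℕ) (C : Set (Fin n → ZMod q)) : Prop :=
  C.Nonempty ∧ codeDist (hammingGraph n q) C = 4 ∧
    ∃ i : Fin n, IsOnePerfect (hammingGraph (n - 1) q) (hammingProj i C)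

/-- A perfect coloring of `G` in `k` colors with quotient matrix `S`: a surjective map
`f` onto the colors such that every vertex of color `i` has exactly `S i j` neighbours
of color `j`. -/
def IsPerfectColoring {V : Type*} (G : SimpleGraph V) {k : ℕ} (f : V → Fin k)
    (S : Matrix (Fin k) (Fin k) ℤ) : Prop :=
  Function.Surjective f ∧
    ∀ v j, (({u | G.Adj v u ∧ f u = j} : Set V).ncard : ℤ) = S (f v) j

/-- A code `C` in `G` is completely regular with quotient matrix `S` if the distance
coloring `x ↦ d(x, C)` is a perfect coloring with quotient matrix `S`. -/
def IsCompletelyRegular {V : Type*} (G : SimpleGraph V) (C : Set V) {k : ℕ}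
    (S : Matrix (Fin k) (Fin k) ℤ) : Prop :=
  ∃ h : ∀ x, distToCode G C x < k,
    IsPerfectColoring G (fun x => (⟨distToCode G C x, h x⟩ : Fin k)) S

/-- The connecting set of the Shrikhande graph as a Cayley graph on `ℤ₄ × ℤ₄`. -/
def shrikhandeSet : Set (ZMod 4 × ZMod 4) :=
  {(0, 1), (1, 0), (0, 3), (3, 0), (1, 1), (3, 3)}

/-- The vertex set of the graph `D(m,n)`. -/
abbrev DoobV (m n : ℕ) := (Fin m → ZMod 4 × ZMod 4) × (Fin n → ZMod 4)

/-- The graph `D(m,n)`: the direct product of `m` copies of the Shrikhande graph and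
`n` copies of `K₄`. Two vertices are adjacent iff they differ in exactly one
coordinate and, if it is a Shrikhande coordinate, the difference there lies in the
connecting set. For `m > 0` it is a Doob graph; `D(0,n) = H(n,4)`. -/
def doobGraph (m n : ℕ) : SimpleGraph (DoobV m n) :=
  SimpleGraph.fromRel (fun x y =>
    (∃ i, x.1 i - y.1 i ∈ shrikhandeSet ∧ (∀ j, j ≠ i → x.1 j = y.1 j) ∧ x.2 = y.2) ∨
    (∃ i, x.2 i ≠ y.2 i ∧ (∀ j, j ≠ i → x.2 j = y.2 j) ∧ x.1 = y.1))

/-- The projection (puncturing) of a code in `D(m,n)` at the `K₄` coordinate `i`. -/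
def doobProj {m n : ℕ} (i : Fin n) (C : Set (DoobV m n)) : Set (DoobV m (n - 1)) :=
  (fun x => (x.1, deleteCoord i x.2)) '' C

/-- A code `C` in `D(m,n)`, `n ≥ 1`, is extended `1`-perfect if it is nonempty, its code
distance is `4`, and its projection at some `K₄` coordinate is a `1`-perfect code in
`D(m,n-1)`. A code `C` in `D(m,0)` is extended `1`-perfect if it is nonempty, its code
distance is `4`, and `2m = (4^l+2)/3` and `|C| = 4^(2m-l-1)` for some `l ≥ 1`. -/
def IsExtOnePerfectD (m n : ℕ) (C : Set (DoobV m n)) : Prop :=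
  C.Nonempty ∧ codeDist (doobGraph m n) C = 4 ∧
    (if n = 0 then
        ∃ l : ℕ, 0 < l ∧ 3 * (2 * m) = 4 ^ l + 2 ∧ C.ncard = 4 ^ (2 * m - l - 1)
      else ∃ i : Fin n, IsOnePerfect (doobGraph m (n - 1)) (doobProj i C))


namespace St2
open Finset

abbrev V (n : ℕ) := Fin n → ZMod 2

noncomputable def sgn (a : ZMod 2) : ℝ := if a = 0 then 1 else -1

lemma zmod2cases : ∀ a : ZMod 2, a = 0 ∨ a = 1 := by decide

lemma sgn_zero : sgn 0 = 1 := if_pos rfl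

lemma sgn_le_one (a : ZMod 2) : sgn a ≤ 1 := by
  unfold sgn; split <;> norm_num

lemma sgn_key (a b c : ZMod 2) : sgn (a * b) * sgn (a * c) = sgn (a * (b + c)) := by
  have h2 : (1 + 1 : ZMod 2) = 0 := by decide
  have h10 : (1 : ZMod 2) ≠ 0 := by decide
  rcases zmod2cases a with rfl | rfl <;> rcases zmod2cases b with rfl | rfl <;>
    rcases zmod2cases c with rfl | rfl <;> simp [sgn, h2, h10]

noncomputable def ep {n : ℕ} (w x : V n) : ℝ := ∏ i, sgn (w i * x i)

noncomputable def mu {n : ℕ} (w : V n) : ℝ := ∑ i, sgn (w i)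

lemma ep_add {n : ℕ} (w x y : V n) : ep w x * ep w y = ep w (x + y) := by
  unfold ep
  rw [← Finset.prod_mul_distrib]
  exact Finset.prod_congr rfl fun i _ => sgn_key _ _ _

lemma ep_sym {n : ℕ} (w x : V n) : ep w x = ep x w := by
  unfold ep; exact Finset.prod_congr rfl fun i _ => by rw [mul_comm]

lemma ep_zero {n : ℕ} (x : V n) : ep 0 x = 1 := by
  unfold ep; simp [sgn_zero]

lemma sum_ep {n : ℕ} (w : V n) : ∑ x : V n, ep w x = if w = 0 then (2 : ℝ) ^ n else 0 := by
  unfold ep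
  rw [← Fintype.piFinset_univ, ← Finset.prod_univ_sum (fun _ : Fin n => (univ : Finset (ZMod 2))) (fun i a => sgn (w i * a))]
  have huniv : (univ : Finset (ZMod 2)) = {0, 1} := by decide
  by_cases hw : w = 0
  · subst hw
    simp [sgn_zero]
  · rw [if_neg hw]
    obtain ⟨i0, hi0⟩ : ∃ i, w i ≠ 0 := by
      by_contra h; push_neg at h; exact hw (funext h)
    apply Finset.prod_eq_zero (Finset.mem_univ i0)
    have h1 : w i0 = 1 := (zmod2cases (w i0)).resolve_left hi0
    rw [huniv, h1]
    norm_num [sgn]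

lemma add_eq_zero_iff {n : ℕ} (x y : V n) : x + y = 0 ↔ x = y := by
  constructor
  · intro h
    funext i
    have := congrFun h i
    have h2 : ∀ a b : ZMod 2, a + b = 0 → a = b := by decide
    exact h2 _ _ this
  · rintro rfl
    funext i
    have h2 : ∀ a : ZMod 2, a + a = 0 := by decide
    exact h2 _

lemma sum_ep_mul {n : ℕ} (x y : V n) :
    ∑ w : V n, ep w x * ep w y = if x = y then (2 : ℝ) ^ n else 0 := by
  have h1 : ∀ w : V n, ep w x * ep w y = ep (x + y) w := by
    intro w
    rw [ep_add, ep_sym]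
  rw [Finset.sum_congr rfl fun w _ => h1 w]
  have h2 : ∀ w : V n, ep (x+y) w = ep (x+y) w := fun _ => rfl
  rw [show (∑ w : V n, ep (x+y) w) = if x + y = 0 then (2:ℝ)^n else 0 from sum_ep (x+y)]
  simp [add_eq_zero_iff]

lemma inversion {n : ℕ} (h : V n → ℝ) (x : V n) :
    ∑ w : V n, (∑ y : V n, h y * ep w y) * ep w x = 2 ^ n * h x := by
  simp only [Finset.sum_mul, mul_assoc]
  rw [Finset.sum_comm]
  have : ∀ y : V n, ∑ w : V n, h y * (ep w y * ep w x) = h y * (if y = x then (2:ℝ)^n else 0) := by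
    intro y
    rw [← Finset.mul_sum, sum_ep_mul]
  rw [Finset.sum_congr rfl fun y _ => this y]
  simp [mul_comm]

end St2

namespace St2
open Finset

def flip {n : ℕ} (x : V n) (i : Fin n) : V n := Function.update x i (x i + 1)

lemma zmod2_ne_iff (a b : ZMod 2) : a ≠ b ↔ b = a + 1 := by revert a b; decide

lemma zmod2_self_ne (a : ZMod 2) : a ≠ a + 1 := by revert a; decide

noncomputable def nbr {n : ℕ} (x : V n) : Finset (V n) :=
  univ.filter fun y => hammingDist x y = 1

lemma mem_nbr {n : ℕ} (x y : V n) : y ∈ nbr x ↔ ∃ i, y = flip x i := by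
  rw [nbr, mem_filter]
  simp only [mem_univ, true_and]
  unfold hammingDist
  rw [Finset.card_eq_one]
  constructor
  · rintro ⟨i, hi⟩
    refine ⟨i, funext fun j => ?_⟩
    by_cases hj : j = i
    · subst hj
      have : j ∈ ({j} : Finset (Fin n)) := Finset.mem_singleton_self j
      rw [← hi, Finset.mem_filter] at this
      have := this.2
      rw [flip, Function.update_self]
      exact (zmod2_ne_iff _ _).mp this
    · have : j ∉ ({i} : Finset (Fin n)) := by simpa using hj
      rw [← hi, Finset.mem_filter] at this
      push_neg at this
      have := this (mem_univ j)
      rw [flip, Function.update_of_ne hj]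
      exact this.symm
  · rintro ⟨i, rfl⟩
    refine ⟨i, ?_⟩
    ext j
    simp only [Finset.mem_filter, mem_univ, true_and, Finset.mem_singleton]
    by_cases hj : j = i
    · subst hj
      simp only [flip, Function.update_self, iff_true]
      exact zmod2_self_ne _
    · simp only [flip, Function.update_of_ne hj, hj, iff_false, not_ne_iff]

lemma flip_injective {n : ℕ} (x : V n) : Function.Injective (flip x) := by
  intro i j h
  by_contra hij
  have h1 := congrFun h i
  simp only [flip, Function.update_self, Function.update_of_ne hij] at h1
  exact zmod2_self_ne _ h1.symm

lemma sum_nbr {n : ℕ} (x : V n) (g : V n → ℝ) :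
    ∑ y ∈ nbr x, g y = ∑ i : Fin n, g (flip x i) := by
  have : nbr x = Finset.image (flip x) univ := by
    ext y
    rw [mem_nbr, Finset.mem_image]
    simp only [mem_univ, true_and]
    exact exists_congr fun i => eq_comm
  rw [this, Finset.sum_image (fun i _ j _ h => flip_injective x h)]

lemma flip_eq_add {n : ℕ} (x : V n) (i : Fin n) : flip x i = x + Pi.single i 1 := by
  funext j
  by_cases hj : j = i
  · subst hj; simp [flip, Function.update_self, Pi.single_eq_same]
  · simp [flip, Function.update_of_ne hj, Pi.single_eq_of_ne hj]

lemma ep_single {n : ℕ} (w : V n) (i : Fin n) : ep w (Pi.single i 1) = sgn (w i) := by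
  unfold ep
  rw [Finset.prod_eq_single i]
  · rw [Pi.single_eq_same, mul_one]
  · intro j _ hj
    rw [Pi.single_eq_of_ne hj, mul_zero, sgn_zero]
  · intro h; exact absurd (mem_univ i) h

lemma sum_nbr_ep {n : ℕ} (w x : V n) : ∑ y ∈ nbr x, ep w y = mu w * ep w x := by
  rw [sum_nbr]
  have : ∀ i : Fin n, ep w (flip x i) = ep w x * sgn (w i) := by
    intro i
    rw [flip_eq_add, ← ep_add, ep_single]
  rw [Finset.sum_congr rfl fun i _ => this i, ← Finset.mul_sum, mu, mul_comm]

lemma adjoint {n : ℕ} (h : V n → ℝ) (w : V n) :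
    ∑ x : V n, (∑ y ∈ nbr x, h y) * ep w x = mu w * ∑ y : V n, h y * ep w y := by
  have key : ∀ x : V n, (∑ y ∈ nbr x, h y) * ep w x
      = ∑ y : V n, (if hammingDist x y = 1 then h y * ep w x else 0) := by
    intro x
    rw [Finset.sum_mul, nbr, Finset.sum_filter]
  rw [Finset.sum_congr rfl fun x _ => key x, Finset.sum_comm]
  rw [Finset.mul_sum]
  refine Finset.sum_congr rfl fun y _ => ?_
  have : ∀ x : V n, (if hammingDist x y = 1 then h y * ep w x else 0)
      = (if hammingDist y x = 1 then h y * ep w x else 0) := by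
    intro x; rw [hammingDist_comm]
  rw [Finset.sum_congr rfl fun x _ => this x, ← Finset.sum_filter, ← nbr,
    ← Finset.mul_sum, sum_nbr_ep]
  ring

noncomputable def Titer {n : ℕ} : ℕ → (V n → ℝ) → (V n → ℝ)
  | 0, g => g
  | t+1, g => fun x => ∑ y ∈ nbr x, Titer t g y

lemma Titer_congr {n : ℕ} (t : ℕ) {g g' : V n → ℝ} (h : ∀ x, g x = g' x) :
    ∀ x, Titer t g x = Titer t g' x := by
  have : g = g' := funext h
  subst this; intro x; rfl

lemma Titer_ep {n : ℕ} (t : ℕ) (w : V n) (x : V n) :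
    Titer t (ep w) x = mu w ^ t * ep w x := by
  induction t generalizing x with
  | zero => simp [Titer]
  | succ t ih =>
    show (∑ y ∈ nbr x, Titer t (ep w) y) = _
    rw [Finset.sum_congr rfl fun y _ => ih y, ← Finset.mul_sum, sum_nbr_ep]
    ring

lemma Titer_sum {n : ℕ} {α : Type*} (s : Finset α) (F : α → V n → ℝ) (t : ℕ) (x : V n) :
    Titer t (fun z => ∑ a ∈ s, F a z) x = ∑ a ∈ s, Titer t (F a) x := by
  induction t generalizing x with
  | zero => rfl
  | succ t ih =>
    show (∑ y ∈ nbr x, Titer t _ y) = _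
    rw [Finset.sum_congr rfl fun y _ => ih y, Finset.sum_comm]
    rfl

lemma Titer_const_mul {n : ℕ} (c : ℝ) (g : V n → ℝ) (t : ℕ) (x : V n) :
    Titer t (fun z => c * g z) x = c * Titer t g x := by
  induction t generalizing x with
  | zero => rfl
  | succ t ih =>
    show (∑ y ∈ nbr x, Titer t _ y) = _
    rw [Finset.sum_congr rfl fun y _ => ih y, ← Finset.mul_sum]
    rfl

end St2

namespace St2
open Finset

section Color
open Matrix

variable {n k : ℕ} (f : V n → Fin k) (S : Matrix (Fin k) (Fin k) ℤ)

/-- count of neighbours of `v` with colour `j`, as a real number -/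
lemma hfc (hf : ∀ v j, (({u | hammingDist v u = 1 ∧ f u = j} : Set (V n)).ncard : ℤ) = S (f v) j)
    (v : V n) (j : Fin k) :
    (((nbr v).filter fun u => f u = j).card : ℝ) = ((S (f v) j : ℤ) : ℝ) := by
  have h := hf v j
  have hset : {u | hammingDist v u = 1 ∧ f u = j}
      = ↑((nbr v).filter fun u => f u = j) := by
    ext u
    simp [nbr, Finset.mem_filter, and_assoc]
  rw [hset, Set.ncard_coe_finset] at h
  exact_mod_cast congrArg (Int.cast : ℤ → ℝ) h

lemma sum_nbr_color
    (hf : ∀ v j, (({u | hammingDist v u = 1 ∧ f u = j} : Set (V n)).ncard : ℤ) = S (f v) j)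
    (v : V n) (g : Fin k → ℝ) :
    ∑ y ∈ nbr v, g (f y) = ∑ m : Fin k, ((S (f v) m : ℤ) : ℝ) * g m := by
  classical
  rw [← Finset.sum_fiberwise_of_maps_to (fun y _ => Finset.mem_univ (f y)) (fun y => g (f y))]
  refine Finset.sum_congr rfl fun m _ => ?_
  have : ∀ y ∈ (nbr v).filter fun y => f y = m, g (f y) = g m := by
    intro y hy
    rw [(Finset.mem_filter.mp hy).2]
  rw [Finset.sum_congr rfl this, Finset.sum_const, ← hfc f S hf v m]
  simp [mul_comm]

lemma Titer_chi
    (hf : ∀ v j, (({u | hammingDist v u = 1 ∧ f u = j} : Set (V n)).ncard : ℤ) = S (f v) j)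
    (i : Fin k) (t : ℕ) (x : V n) :
    Titer t (fun z => if f z = i then (1:ℝ) else 0) x = (((S ^ t) (f x) i : ℤ) : ℝ) := by
  induction t generalizing x with
  | zero =>
    show (if f x = i then (1:ℝ) else 0) = _
    rw [pow_zero, Matrix.one_apply]
    split <;> simp_all
  | succ t ih =>
    show (∑ y ∈ nbr x, Titer t _ y) = _
    rw [Finset.sum_congr rfl fun y _ => ih y,
      sum_nbr_color f S hf x (fun m => (((S ^ t) m i : ℤ) : ℝ))]
    rw [pow_succ' S t, Matrix.mul_apply]
    push_cast
    ring_nf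

lemma eigen_of_fourier
    (hf : ∀ v j, (({u | hammingDist v u = 1 ∧ f u = j} : Set (V n)).ncard : ℤ) = S (f v) j)
    (w : V n) (d : Fin k → ℝ) (hd : d = fun m => ∑ x ∈ univ.filter fun x => f x = m, ep w x)
    (hdne : d ≠ 0) :
    ∃ v : Fin k → ℝ, v ≠ 0 ∧ (S.map ((↑) : ℤ → ℝ)).mulVec v = mu w • v := by
  classical
  -- d ᵥ* (Sr - μ•1) = 0
  set Sr : Matrix (Fin k) (Fin k) ℝ := S.map ((↑) : ℤ → ℝ) with hSr
  have hrel : ∀ r : Fin k, ∑ m : Fin k, d m * Sr m r = mu w * d r := by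
    intro r
    have hadj := adjoint (fun y => if f y = r then (1:ℝ) else 0) w
    have hl : ∀ x : V n, (∑ y ∈ nbr x, if f y = r then (1:ℝ) else 0)
        = ((S (f x) r : ℤ) : ℝ) := by
      intro x
      have := sum_nbr_color f S hf x (fun m => if m = r then (1:ℝ) else 0)
      simpa [Finset.sum_ite_eq', mul_ite] using this
    rw [Finset.sum_congr rfl fun x _ => by rw [hl x]] at hadj
    -- LHS of hadj: ∑ x, Sr (f x) r * ep w x = ∑ m, d m * Sr m r
    have hfib : ∑ x : V n, ((S (f x) r : ℤ) : ℝ) * ep w x = ∑ m : Fin k, d m * Sr m r := by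
      rw [← Finset.sum_fiberwise_of_maps_to (fun y _ => Finset.mem_univ (f y))
        (fun x => ((S (f x) r : ℤ) : ℝ) * ep w x)]
      refine Finset.sum_congr rfl fun m _ => ?_
      have : ∀ x ∈ univ.filter fun x => f x = m,
          ((S (f x) r : ℤ) : ℝ) * ep w x = ((S m r : ℤ) : ℝ) * ep w x := by
        intro x hx
        rw [(Finset.mem_filter.mp hx).2]
      rw [Finset.sum_congr rfl this, ← Finset.mul_sum, hd]
      simp [Sr, Matrix.map_apply, mul_comm]
    -- RHS of hadj
    have hrhs : (∑ y : V n, (if f y = r then (1:ℝ) else 0) * ep w y) = d r := by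
      rw [hd]
      show _ = ∑ x ∈ univ.filter (fun x => f x = r), ep w x
      rw [Finset.sum_filter]
      exact Finset.sum_congr rfl fun y _ => by split <;> simp
    rw [hfib, hrhs] at hadj
    exact hadj
  have hvm : d ᵥ* (Sr - mu w • 1) = 0 := by
    funext r
    have hterm : ∀ m : Fin k,
        d m * (Sr - mu w • 1) m r = d m * Sr m r - mu w * (if m = r then d m else 0) := by
      intro m
      simp only [Matrix.sub_apply, Matrix.smul_apply, Matrix.one_apply, smul_eq_mul]
      split <;> ring
    show ∑ m : Fin k, d m * (Sr - mu w • 1) m r = (0 : ℝ)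
    rw [Finset.sum_congr rfl fun m _ => hterm m, Finset.sum_sub_distrib, hrel r,
      ← Finset.mul_sum]
    simp
  have hdet : (Sr - mu w • 1).det = 0 := Matrix.exists_vecMul_eq_zero_iff.mp ⟨d, hdne, hvm⟩
  obtain ⟨v, hv0, hv⟩ := Matrix.exists_mulVec_eq_zero_iff.mpr hdet
  refine ⟨v, hv0, ?_⟩
  rw [Matrix.sub_mulVec, Matrix.smul_mulVec, Matrix.one_mulVec, sub_eq_zero] at hv
  exact hv

end Color
end St2

namespace St2
open Finset Matrix

lemma mu_le {n : ℕ} (w : V n) : mu w ≤ (n : ℝ) := by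
  unfold mu
  calc ∑ i, sgn (w i) ≤ ∑ i : Fin n, (1:ℝ) := Finset.sum_le_sum fun i _ => sgn_le_one _
  _ = n := by simp

lemma mu_zero (n : ℕ) : mu (0 : V n) = n := by
  unfold mu; simp [sgn_zero]

lemma mu_lt_of_ne {n : ℕ} (w : V n) (hw : w ≠ 0) : mu w < n := by
  obtain ⟨i0, hi0⟩ : ∃ i, w i ≠ 0 := by
    by_contra h; push_neg at h; exact hw (funext h)
  have h1 : sgn (w i0) < 1 := by
    unfold sgn; rw [if_neg hi0]; norm_num
  calc mu w < ∑ i : Fin n, (1:ℝ) :=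
      Finset.sum_lt_sum (fun i _ => sgn_le_one _) ⟨i0, Finset.mem_univ i0, h1⟩
  _ = n := by simp

lemma main (n : ℕ) {k l : ℕ} (f : (Fin n → ZMod 2) → Fin k)
    (S : Matrix (Fin k) (Fin k) ℤ)
    (hsurj : Function.Surjective f)
    (hcnt : ∀ v j, (({u | hammingDist v u = 1 ∧ f u = j} : Set (V n)).ncard : ℤ) = S (f v) j)
    (L : Fin (l + 1) → ℝ) (hmono : StrictAnti L)
    (heig : ∀ x : ℝ,
      (∃ v : Fin k → ℝ, v ≠ 0 ∧ (S.map ((↑) : ℤ → ℝ)).mulVec v = x • v) ↔ ∃ j, L j = x)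
    (i : Fin k) :
    ∃ a : Fin l → ℝ,
      (∀ t : ℕ, t < l →
        ∑ j : Fin l, (L j.succ) ^ t * a j
          = ((f ⁻¹' {i}).ncard : ℝ) * (((S ^ t) i i : ℤ) : ℝ)
            - (((f ⁻¹' {i}).ncard : ℝ) ^ 2 / 2 ^ n) * (L 0) ^ t) ∧
      (∀ b : Fin l → ℝ,
        (∀ t : ℕ, t < l →
          ∑ j : Fin l, (L j.succ) ^ t * b j
            = ((f ⁻¹' {i}).ncard : ℝ) * (((S ^ t) i i : ℤ) : ℝ)
              - (((f ⁻¹' {i}).ncard : ℝ) ^ 2 / 2 ^ n) * (L 0) ^ t) → b = a) ∧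
      (∀ j : Fin l, ∃ r : ℕ, (2 ^ n : ℝ) * a j = r) := by
  classical
  have h2n : (2:ℝ)^n ≠ 0 := by positivity
  set Cf : Finset (V n) := univ.filter (fun x => f x = i) with hCf
  set c : ℝ := (Cf.card : ℝ) with hc
  set chat : V n → ℝ := fun w => ∑ x ∈ Cf, ep w x with hchat
  have hpre : ((f ⁻¹' {i}).ncard : ℝ) = c := by
    have hs : f ⁻¹' {i} = ↑Cf := by ext x; simp [hCf]
    rw [hs, Set.ncard_coe_finset]
  -- Fourier inversion for the indicator
  have hchi : ∀ x : V n, (if f x = i then (1:ℝ) else 0)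
      = ∑ w : V n, ((2:ℝ)^n)⁻¹ * chat w * ep w x := by
    intro x
    have hinv := inversion (fun y : V n => if f y = i then (1:ℝ) else 0) x
    have hin : ∀ w : V n, (∑ y : V n, (if f y = i then (1:ℝ) else 0) * ep w y) = chat w := by
      intro w
      rw [hchat]
      show _ = ∑ x ∈ Cf, ep w x
      rw [hCf, Finset.sum_filter]
      exact Finset.sum_congr rfl fun y _ => by split <;> simp
    rw [Finset.sum_congr rfl fun w _ => by rw [hin w]] at hinv
    have := congrArg (fun z => ((2:ℝ)^n)⁻¹ * z) hinv
    rw [← mul_assoc, inv_mul_cancel₀ h2n, one_mul] at this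
    rw [← this, Finset.mul_sum]
    exact Finset.sum_congr rfl fun w _ => by ring
  -- the key identity
  have key : ∀ t : ℕ, ∑ w : V n, mu w ^ t * chat w ^ 2
      = 2^n * (c * (((S^t) i i : ℤ) : ℝ)) := by
    intro t
    have h1 : ∑ x ∈ Cf, Titer t (fun z => if f z = i then (1:ℝ) else 0) x
        = c * (((S^t) i i : ℤ) : ℝ) := by
      have e1 : ∀ x ∈ Cf, Titer t (fun z => if f z = i then (1:ℝ) else 0) x
          = (((S^t) i i : ℤ) : ℝ) := by
        intro x hx
        rw [Titer_chi f S hcnt i t x]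
        rw [hCf] at hx
        rw [(Finset.mem_filter.mp hx).2]
      rw [Finset.sum_congr rfl e1, Finset.sum_const, hc, nsmul_eq_mul]
    have h2 : ∀ x : V n, Titer t (fun z => if f z = i then (1:ℝ) else 0) x
        = ∑ w : V n, ((2:ℝ)^n)⁻¹ * chat w * (mu w ^ t * ep w x) := by
      intro x
      rw [Titer_congr t hchi x,
        Titer_sum univ (fun w z => ((2:ℝ)^n)⁻¹ * chat w * ep w z) t x]
      exact Finset.sum_congr rfl fun w _ => by
        rw [Titer_const_mul (((2:ℝ)^n)⁻¹ * chat w) (ep w) t x, Titer_ep]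
    rw [Finset.sum_congr rfl fun x _ => h2 x, Finset.sum_comm] at h1
    have h3 : ∀ w : V n, (∑ x ∈ Cf, ((2:ℝ)^n)⁻¹ * chat w * (mu w ^ t * ep w x))
        = ((2:ℝ)^n)⁻¹ * (mu w ^ t * chat w ^ 2) := by
      intro w
      have : ∀ x ∈ Cf, ((2:ℝ)^n)⁻¹ * chat w * (mu w ^ t * ep w x)
          = (((2:ℝ)^n)⁻¹ * chat w * mu w ^ t) * ep w x := fun x _ => by ring
      rw [Finset.sum_congr rfl this, ← Finset.mul_sum]
      have : (∑ x ∈ Cf, ep w x) = chat w := by rw [hchat]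
      rw [this]; ring
    rw [Finset.sum_congr rfl fun w _ => h3 w, ← Finset.mul_sum] at h1
    rw [← h1]
    rw [← mul_assoc, mul_inv_cancel₀ h2n, one_mul]
  -- vanishing of irrelevant Fourier coefficients
  have hvan : ∀ w : V n, chat w ≠ 0 → ∃ j, L j = mu w := by
    intro w hw
    have hdne : (fun m => ∑ x ∈ univ.filter (fun x => f x = m), ep w x) ≠ 0 := by
      intro h0
      apply hw
      have := congrFun h0 i
      simpa [hchat, hCf] using this
    obtain ⟨v, hv0, hv⟩ := eigen_of_fourier f S hcnt w _ rfl hdne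
    exact (heig (mu w)).mp ⟨v, hv0, hv⟩
  -- the top eigenvalue is n
  have hkne : Nonempty (Fin k) := ⟨f (fun _ => 0)⟩
  have hrow : ∀ m : Fin k, ∑ r, ((S m r : ℤ) : ℝ) = n := by
    intro m
    obtain ⟨v, hv⟩ := hsurj m
    have hco := sum_nbr_color f S hcnt v (fun _ => (1:ℝ))
    rw [sum_nbr v (fun _ => (1:ℝ))] at hco
    simp only [mul_one] at hco
    rw [hv] at hco
    rw [← hco]
    simp
  have hnL : ∃ j, L j = (n : ℝ) := by
    apply (heig (n:ℝ)).mp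
    refine ⟨fun _ => 1, ?_, ?_⟩
    · intro h0
      have := congrFun h0 (Classical.arbitrary (Fin k))
      norm_num at this
    · funext m
      show ∑ r, (S.map ((↑) : ℤ → ℝ)) m r * 1 = (n:ℝ) • (1:ℝ)
      simp only [mul_one, Matrix.map_apply, smul_eq_mul]
      rw [hrow m]
  have hLle : ∀ j, L j ≤ (n : ℝ) := by
    intro j
    obtain ⟨v, hv0, hv⟩ := (heig (L j)).mpr ⟨j, rfl⟩
    obtain ⟨m0, hm0⟩ : ∃ m, v m ≠ 0 := by
      by_contra h0; push_neg at h0; exact hv0 (funext h0)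
    obtain ⟨x0, hx0⟩ := hsurj m0
    have hT : ∀ x : V n, ∑ y ∈ nbr x, v (f y) = L j * v (f x) := by
      intro x
      rw [sum_nbr_color f S hcnt x v]
      have := congrFun hv (f x)
      simpa [Matrix.mulVec, dotProduct, Matrix.map_apply] using this
    have hne : ∃ w : V n, (∑ y : V n, v (f y) * ep w y) ≠ 0 := by
      by_contra hcon; push_neg at hcon
      have hinv := inversion (fun y : V n => v (f y)) x0
      rw [Finset.sum_congr rfl fun w _ => by rw [hcon w, zero_mul]] at hinv
      rw [Finset.sum_const_zero] at hinv
      rw [hx0] at hinv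
      exact hm0 (by
        have := hinv.symm
        rcases mul_eq_zero.mp this with h | h
        · exact absurd h h2n
        · exact h)
    obtain ⟨w, hw⟩ := hne
    have hadj := adjoint (fun y : V n => v (f y)) w
    rw [Finset.sum_congr rfl fun x _ => by rw [hT x]] at hadj
    have hLmu : L j * (∑ y : V n, v (f y) * ep w y)
        = mu w * (∑ y : V n, v (f y) * ep w y) := by
      rw [← hadj, Finset.mul_sum]
      exact Finset.sum_congr rfl fun y _ => by ring
    have : L j = mu w := mul_right_cancel₀ hw hLmu
    rw [this]
    exact mu_le w
  have hL0 : L 0 = (n : ℝ) := by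
    obtain ⟨j0, hj0⟩ := hnL
    refine le_antisymm (hLle 0) ?_
    rw [← hj0]
    exact hmono.antitone (Fin.zero_le j0)
  -- partition
  set A : Fin (l+1) → ℝ := fun j => ∑ w ∈ univ.filter (fun w : V n => mu w = L j), chat w ^ 2
    with hA
  have hpart : ∀ t : ℕ, ∑ w : V n, mu w ^ t * chat w ^ 2 = ∑ j : Fin (l+1), L j ^ t * A j := by
    intro t
    have h4 : ∀ j : Fin (l+1), L j ^ t * A j
        = ∑ w ∈ univ.filter (fun w : V n => mu w = L j), mu w ^ t * chat w ^ 2 := by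
      intro j
      rw [hA, Finset.mul_sum]
      exact (Finset.sum_congr rfl fun w hw => by rw [(Finset.mem_filter.mp hw).2]).symm
    rw [Finset.sum_congr rfl fun j (_ : j ∈ univ) => h4 j]
    rw [← Finset.sum_image (f := fun μ => ∑ w ∈ univ.filter (fun w : V n => mu w = μ),
      mu w ^ t * chat w ^ 2) (g := L) (fun x _ y _ h => hmono.injective h)]
    rw [Finset.sum_fiberwise_eq_sum_filter univ (univ.image L) mu
      (fun w => mu w ^ t * chat w ^ 2)]
    exact (Finset.sum_filter_of_ne fun w _ hne => by
      obtain ⟨j, hj⟩ := hvan w (by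
        intro h0
        apply hne
        rw [h0]
        ring)
      exact Finset.mem_image.mpr ⟨j, Finset.mem_univ j, hj⟩).symm
  have hA0 : A 0 = c ^ 2 := by
    simp only [hA]
    have hfil : univ.filter (fun w : V n => mu w = L 0) = {0} := by
      ext w
      simp only [Finset.mem_filter, Finset.mem_univ, true_and, Finset.mem_singleton, hL0]
      constructor
      · intro h
        by_contra hne
        exact absurd h (ne_of_lt (mu_lt_of_ne w hne))
      · rintro rfl
        exact mu_zero n
    rw [hfil, Finset.sum_singleton]
    have : chat 0 = c := by
      rw [hchat, hc]
      simp [ep_zero]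
    rw [this]
  set a : Fin l → ℝ := fun j => A j.succ / 2^n with ha
  have hmain : ∀ t : ℕ, ∑ j : Fin l, L j.succ ^ t * a j
      = c * (((S^t) i i : ℤ) : ℝ) - c^2 / 2^n * L 0 ^ t := by
    intro t
    have h5 := key t
    rw [hpart t, Fin.sum_univ_succ, hA0] at h5
    have h6 : ∑ j : Fin l, L j.succ ^ t * a j
        = (∑ j : Fin l, L j.succ ^ t * A j.succ) / 2^n := by
      rw [Finset.sum_div]
      exact Finset.sum_congr rfl fun j _ => by rw [ha]; ring
    have h7 : ∑ j : Fin l, L j.succ ^ t * A j.succ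
        = 2^n * (c * (((S^t) i i : ℤ) : ℝ)) - L 0 ^ t * c ^ 2 := by linarith
    rw [h6, h7]
    field_simp
  refine ⟨a, fun t _ => by rw [hpre]; exact hmain t, ?_, ?_⟩
  · -- uniqueness
    intro b hb
    have hz : ∀ t : Fin l, ∑ j : Fin l, (b j - a j) * (L j.succ) ^ (t : ℕ) = 0 := by
      intro t
      have h8 := hb (t : ℕ) t.isLt
      have h9 := hmain (t : ℕ)
      rw [hpre] at h8
      have : ∀ j : Fin l, (b j - a j) * (L j.succ) ^ (t:ℕ)
          = L j.succ ^ (t:ℕ) * b j - L j.succ ^ (t:ℕ) * a j := fun j => by ring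
      rw [Finset.sum_congr rfl fun j _ => this j, Finset.sum_sub_distrib, h8, h9]
      ring
    have hinj : Function.Injective (fun j : Fin l => L j.succ) :=
      fun j j' h => Fin.succ_injective l (hmono.injective h)
    have := Matrix.eq_zero_of_forall_pow_sum_mul_pow_eq_zero hinj hz
    funext j
    have := congrFun this j
    simpa [sub_eq_zero] using this
  · -- integrality
    intro j
    set czt : V n → ℤ := fun w => ∑ x ∈ Cf, ∏ i', (if w i' * x i' = 0 then (1:ℤ) else -1)
      with hczt
    have hcz : ∀ w : V n, chat w = ((czt w : ℤ) : ℝ) := by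
      intro w
      rw [hchat, hczt]
      push_cast
      refine Finset.sum_congr rfl fun x _ => ?_
      unfold ep
      refine Finset.prod_congr rfl fun i' _ => ?_
      unfold sgn
      split <;> simp
    set N : ℤ := ∑ w ∈ univ.filter (fun w : V n => mu w = L j.succ), czt w ^ 2 with hN
    have hNnn : 0 ≤ N := Finset.sum_nonneg fun w _ => sq_nonneg _
    refine ⟨N.toNat, ?_⟩
    have h10 : (2:ℝ)^n * a j = A j.succ := by
      rw [ha]
      field_simp
    rw [h10]
    simp only [hA]
    have h11 : ∀ w ∈ univ.filter (fun w : V n => mu w = L j.succ),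
        chat w ^ 2 = (((czt w ^ 2 : ℤ)) : ℝ) := by
      intro w _
      rw [hcz w]
      push_cast
      ring
    rw [Finset.sum_congr rfl h11, ← Int.cast_sum, ← hN]
    exact_mod_cast congrArg (Int.cast : ℤ → ℝ) (Int.toNat_of_nonneg hNnn).symm

end St2


/-- Theorem 1 for `H(n,2)` (Statement 2): for a perfect coloring `f` of `H(n,2)` with
quotient matrix `S` whose distinct eigenvalues are `L 0 > L 1 > … > L l`, and any color
`i`, the Vandermonde system has a unique solution `(a 0, …, a (l-1))` (indexed so that
`a j` corresponds to the eigenvalue `L (j+1)`), and `2^n * a j` is a non-negative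
integer for every `j`. -/
theorem statement2 (n : ℕ) {k l : ℕ} (f : (Fin n → ZMod 2) → Fin k)
    (S : Matrix (Fin k) (Fin k) ℤ)
    (hf : IsPerfectColoring (hammingGraph n 2) f S)
    (L : Fin (l + 1) → ℝ) (hmono : StrictAnti L)
    (heig : ∀ x : ℝ,
      (∃ v : Fin k → ℝ, v ≠ 0 ∧ (S.map ((↑) : ℤ → ℝ)).mulVec v = x • v) ↔ ∃ j, L j = x)
    (i : Fin k) :
    ∃ a : Fin l → ℝ,
      (∀ t : ℕ, t < l →
        ∑ j : Fin l, (L j.succ) ^ t * a j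
          = ((f ⁻¹' {i}).ncard : ℝ) * (((S ^ t) i i : ℤ) : ℝ)
            - (((f ⁻¹' {i}).ncard : ℝ) ^ 2 / 2 ^ n) * (L 0) ^ t) ∧
      (∀ b : Fin l → ℝ,
        (∀ t : ℕ, t < l →
          ∑ j : Fin l, (L j.succ) ^ t * b j
            = ((f ⁻¹' {i}).ncard : ℝ) * (((S ^ t) i i : ℤ) : ℝ)
              - (((f ⁻¹' {i}).ncard : ℝ) ^ 2 / 2 ^ n) * (L 0) ^ t) → b = a) ∧
      (∀ j : Fin l, ∃ r : ℕ, (2 ^ n : ℝ) * a j = r) := by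
  exact St2.main n f S hf.1 (fun v j => hf.2 v j) L hmono heig i
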